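/- Under the assumptions of the previous statement, the linear operator L(X) = A X B^H is injective, and its Moore–Penrose pseudo-inverse is given explicitly by L†(V) = (1/(N_s N_r)) · A^H V B D^{−1}; in particular L†(L(X)) = X for every X ∈ ℂ^{(2K+1)×(2K+1)}. -/

import Mathlib

theorem stmt7 (K Ns Nr : ℕ) (hNs : 2 * K + 1 ≤ Ns) (hNr : 2 * K + 1 ≤ Nr)
    (A : Matrix (Fin Ns) (Fin (2 * K + 1)) ℂ) (B : Matrix (Fin Nr) (Fin (2 * K + 1)) ℂ)
    (d : Fin (2 * K + 1) → ℂ) (hd : ∀ n, d n ≠ 0)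
    (hA : A.conjTranspose * A = (Ns : ℂ) • (1 : Matrix (Fin (2 * K + 1)) (Fin (2 * K + 1)) ℂ))
    (hB : B.conjTranspose * B =
      (Nr : ℂ) • Matrix.diagonal (fun n => ((‖d n‖ ^ 2 : ℝ) : ℂ))) :
    Function.Injective
      (fun X : Matrix (Fin (2 * K + 1)) (Fin (2 * K + 1)) ℂ => A * X * B.conjTranspose) ∧
    ∀ X : Matrix (Fin (2 * K + 1)) (Fin (2 * K + 1)) ℂ,
      (1 / ((Ns : ℂ) * (Nr : ℂ))) •
        (A.conjTranspose * (A * X * B.conjTranspose) * B *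
          Matrix.diagonal (fun n => (((‖d n‖ ^ 2 : ℝ) : ℂ))⁻¹)) = X := by
  have hNs0 : (Ns : ℂ) ≠ 0 := Nat.cast_ne_zero.mpr (by omega)
  have hNr0 : (Nr : ℂ) ≠ 0 := Nat.cast_ne_zero.mpr (by omega)
  have hdiag : Matrix.diagonal (fun n => ((‖d n‖ ^ 2 : ℝ) : ℂ)) *
      Matrix.diagonal (fun n => (((‖d n‖ ^ 2 : ℝ) : ℂ))⁻¹) = 1 := by
    rw [Matrix.diagonal_mul_diagonal]
    have h : (fun n => ((‖d n‖ ^ 2 : ℝ) : ℂ) * (((‖d n‖ ^ 2 : ℝ) : ℂ))⁻¹) = fun _ => (1 : ℂ) := by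
      funext n
      apply mul_inv_cancel₀
      simp only [ne_eq, Complex.ofReal_eq_zero]
      exact pow_ne_zero 2 ((norm_ne_zero_iff).mpr (hd n))
    rw [h, Matrix.diagonal_one]
  have key : ∀ X : Matrix (Fin (2 * K + 1)) (Fin (2 * K + 1)) ℂ,
      (1 / ((Ns : ℂ) * (Nr : ℂ))) •
        (A.conjTranspose * (A * X * B.conjTranspose) * B *
          Matrix.diagonal (fun n => (((‖d n‖ ^ 2 : ℝ) : ℂ))⁻¹)) = X := by
    intro X
    have : A.conjTranspose * (A * X * B.conjTranspose) * B *
        Matrix.diagonal (fun n => (((‖d n‖ ^ 2 : ℝ) : ℂ))⁻¹)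
        = ((Ns : ℂ) * (Nr : ℂ)) • X := by
      calc A.conjTranspose * (A * X * B.conjTranspose) * B *
            Matrix.diagonal (fun n => (((‖d n‖ ^ 2 : ℝ) : ℂ))⁻¹)
          = (A.conjTranspose * A) * X * ((B.conjTranspose * B) *
            Matrix.diagonal (fun n => (((‖d n‖ ^ 2 : ℝ) : ℂ))⁻¹)) := by
            simp only [Matrix.mul_assoc]
        _ = ((Ns : ℂ) • (1 : Matrix (Fin (2 * K + 1)) (Fin (2 * K + 1)) ℂ)) * X *
            (((Nr : ℂ) • Matrix.diagonal (fun n => ((‖d n‖ ^ 2 : ℝ) : ℂ))) *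
            Matrix.diagonal (fun n => (((‖d n‖ ^ 2 : ℝ) : ℂ))⁻¹)) := by
            rw [hA, hB]
        _ = ((Ns : ℂ) * (Nr : ℂ)) • X := by
            simp only [Matrix.smul_mul, Matrix.mul_smul, one_mul, smul_smul, mul_comm,
              Matrix.diagonal_mul_diagonal, Complex.ofReal_pow]
            have h2 : (fun i => ((‖d i‖ : ℂ)) ^ 2 * (((‖d i‖ : ℂ)) ^ 2)⁻¹) = fun _ => (1 : ℂ) := by
              funext i
              apply mul_inv_cancel₀
              exact pow_ne_zero 2 (by simp [norm_ne_zero_iff.mpr (hd i)])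
            rw [h2, Matrix.diagonal_one, Matrix.mul_one]
    rw [this, smul_smul]
    rw [one_div, inv_mul_cancel₀ (mul_ne_zero hNs0 hNr0), one_smul]
  refine ⟨?_, key⟩
  intro X Y h
  simp only at h
  have := key X
  rw [h, key Y] at this
  exact this.symm
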